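/- Let C(x,y) = (x, -ry), D(x,y) = (α - rβxy, -βxy), E(x,y) = (-α + r²βxy, -βxy), F(x,y) = (α - r³βxy, -βxy), with α, β > 0 and r > 0. Then for every (x,y) with x > 0, y > 0, the set of vectors {C(x,y), D(x,y), E(x,y), F(x,y)} spans ℝ². -/

import Mathlib

lemma span_pair_det_ne_zero (u v : ℝ × ℝ) (h : u.1 * v.2 - u.2 * v.1 ≠ 0) :
    Submodule.span ℝ ({u, v} : Set (ℝ × ℝ)) = ⊤ := by
  rw [eq_top_iff]
  rintro ⟨a, b⟩ -
  rw [Submodule.mem_span_pair]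
  refine ⟨(a * v.2 - b * v.1) / (u.1 * v.2 - u.2 * v.1),
          (b * u.1 - a * u.2) / (u.1 * v.2 - u.2 * v.1), ?_⟩
  ext <;> simp only [Prod.fst_add, Prod.snd_add, Prod.smul_fst, Prod.smul_snd, smul_eq_mul] <;> rw [div_mul_eq_mul_div, div_mul_eq_mul_div, ← add_div, div_eq_iff h] <;> ring

/-- The vectors `C, D, E, F` from the Hörmander-condition computation span `ℝ²` at every
point of the open positive quadrant. -/
theorem hormander_vectors_span (α β r : ℝ) (hα : 0 < α) (hβ : 0 < β) (hr : 0 < r)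
    (x y : ℝ) (hx : 0 < x) (hy : 0 < y) :
    Submodule.span ℝ
      ({(x, -r * y), (α - r * β * x * y, -(β * x * y)),
        (-α + r ^ 2 * β * x * y, -(β * x * y)),
        (α - r ^ 3 * β * x * y, -(β * x * y))} : Set (ℝ × ℝ)) = ⊤ := by
  set C : ℝ × ℝ := (x, -r * y)
  set D : ℝ × ℝ := (α - r * β * x * y, -(β * x * y))
  set E : ℝ × ℝ := (-α + r ^ 2 * β * x * y, -(β * x * y))
  set F : ℝ × ℝ := (α - r ^ 3 * β * x * y, -(β * x * y))
  have hbxy : 0 < β * x * y := by positivity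
  by_cases hr1 : r = 1
  · subst hr1
    by_cases hCD : C.1 * D.2 - C.2 * D.1 = 0
    · -- use C, E
      have hCE : C.1 * E.2 - C.2 * E.1 ≠ 0 := by
        simp only [C, D, E] at hCD ⊢
        intro h
        nlinarith [hCD, h, mul_pos (mul_pos hβ (mul_pos hx hx)) hy]
      have h1 : Submodule.span ℝ ({C, E} : Set (ℝ × ℝ)) = ⊤ :=
        span_pair_det_ne_zero _ _ hCE
      rw [eq_top_iff, ← h1]
      exact Submodule.span_mono (by intro z hz; simp at hz ⊢; tauto)
    · have h1 : Submodule.span ℝ ({C, D} : Set (ℝ × ℝ)) = ⊤ :=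
        span_pair_det_ne_zero _ _ hCD
      rw [eq_top_iff, ← h1]
      exact Submodule.span_mono (by intro z hz; simp at hz ⊢; tauto)
  · -- r ≠ 1 : use D, F
    have hDF : D.1 * F.2 - D.2 * F.1 ≠ 0 := by
      have heq : D.1 * F.2 - D.2 * F.1 = (β * x * y) ^ 2 * (r - r ^ 3) := by
        simp only [D, F]; ring
      rw [heq]
      refine mul_ne_zero (by positivity) ?_
      intro h
      apply hr1
      have h2 : (r - 1) * (r * (r + 1)) = 0 := by linear_combination -h
      rcases mul_eq_zero.mp h2 with h3 | h3
      · linarith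
      · nlinarith
    have h1 : Submodule.span ℝ ({D, F} : Set (ℝ × ℝ)) = ⊤ :=
      span_pair_det_ne_zero _ _ hDF
    rw [eq_top_iff, ← h1]
    exact Submodule.span_mono (by intro z hz; simp at hz ⊢; tauto)
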